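/- Let f : ℝ³ → [0,∞) be measurable, not almost everywhere zero, with ∫_{ℝ³} (1+|q|)(f + f·|ln f|)(q) dq < ∞, and let n > 0, β > 0, u ∈ ℝ³ be parameters such that the Jüttner distribution J(q) = J(n,β,u;q) has the same five moments as f, i.e. ∫ (J − f) dq/q⁰ = 0, ∫ (J − f) dq = 0 and ∫ qⁱ (J − f) dq/q⁰ = 0 for i = 1,2,3. For a nonnegative function g define σ_g = −∫_{ℝ³} (√(1+|u|²) − u·q/q⁰) g(q) ln(g(q)) dq and e_g = ∫_{ℝ³} (√(1+|u|²) q⁰ − u·q)² g(q) dq/q⁰. Then (σ_J − β e_J) − (σ_f − β e_f) ≥ 0. -/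

import Mathlib

open MeasureTheory Real
open scoped InnerProductSpace

noncomputable section

/-- Momentum space `ℝ³`. -/
abbrev E3 := EuclideanSpace ℝ (Fin 3)

/-- `q⁰ = √(1+|q|²)`. -/
def q0 (q : E3) : ℝ := Real.sqrt (1 + ‖q‖ ^ 2)

/-- Modified Bessel function `K_j(β) = ∫₀^∞ cosh(j r) exp(−β cosh r) dr`. -/
def Kb (j : ℕ) (β : ℝ) : ℝ :=
  ∫ r in Set.Ioi (0 : ℝ), Real.cosh (j * r) * Real.exp (-β * Real.cosh r)

end

noncomputable section

/-- `M(β) = ∫_{ℝ³} exp(−β √(1+|p|²)) dp`. -/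
def Mf (β : ℝ) : ℝ := ∫ p : E3, Real.exp (-β * Real.sqrt (1 + ‖p‖ ^ 2))

/-- `Ψ(β) = 3/β + K₁(β)/K₂(β)`. -/
def Ψf (β : ℝ) : ℝ := 3 / β + Kb 1 β / Kb 2 β

/-- The dimensionless Jüttner distribution
`J(n,β,u;q) = (n/M(β)) exp(−β(√(1+|u|²) q⁰ − u·q))`. -/
def Jut (n β : ℝ) (u : E3) (q : E3) : ℝ :=
  n / Mf β * Real.exp (-β * (Real.sqrt (1 + ‖u‖ ^ 2) * q0 q - ⟪u, q⟫_ℝ))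

end

lemma poly_exp_integrable (k : ℕ) {ε : ℝ} (hε : 0 < ε) :
    Integrable (fun q : E3 => (1 + ‖q‖) ^ k * Real.exp (-(ε * (1 + ‖q‖)))) := by
  have hfin : ((Module.finrank ℝ E3 : ℝ)) < ((k + 4 : ℕ) : ℝ) := by
    have h3 : Module.finrank ℝ E3 = 3 := by
      simp [finrank_euclideanSpace]
    rw [h3]
    push_cast
    linarith [Nat.cast_nonneg (α := ℝ) k]
  have hI : Integrable (fun q : E3 => (1 + ‖q‖) ^ (-((k + 4 : ℕ) : ℝ))) :=
    integrable_one_add_norm hfin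
  set m := 2 * k + 4 with hm
  refine (hI.const_mul ((Nat.factorial m : ℝ) / ε ^ m)).mono'
    (Measurable.aestronglyMeasurable (by fun_prop))
    (Filter.Eventually.of_forall fun q => ?_)
  have hp : (0:ℝ) < 1 + ‖q‖ := by positivity
  have hx : (0:ℝ) ≤ ε * (1 + ‖q‖) := by positivity
  have h1 : (ε * (1 + ‖q‖)) ^ m ≤ (Nat.factorial m : ℝ) * Real.exp (ε * (1 + ‖q‖)) := by
    have := Real.pow_div_factorial_le_exp (ε * (1 + ‖q‖)) hx m
    rw [div_le_iff₀ (by positivity)] at this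
    linarith
  rw [Real.norm_eq_abs, abs_of_nonneg (by positivity), Real.rpow_neg hp.le,
    Real.rpow_natCast, ← div_eq_mul_inv, le_div_iff₀ (by positivity)]
  have hpm : (1 + ‖q‖) ^ k * (1 + ‖q‖) ^ (k + 4) = (1 + ‖q‖) ^ m := by
    rw [← pow_add]; congr 1; omega
  rw [mul_right_comm, hpm, Real.exp_neg, ← div_eq_mul_inv,
    div_le_div_iff₀ (Real.exp_pos _) (pow_pos hε m)]
  rw [mul_pow] at h1
  rw [mul_comm]
  exact h1

lemma entropy_key {x y : ℝ} (hx : 0 ≤ x) (hy : 0 < y) :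
    x - y ≤ x * Real.log x - x * Real.log y := by
  rcases eq_or_lt_of_le hx with h | hx
  · simp [← h]; positivity
  · have h := Real.log_le_sub_one_of_pos (div_pos hy hx)
    rw [Real.log_div hy.ne' hx.ne'] at h
    have h2 : x * (Real.log y - Real.log x) ≤ x * (y / x - 1) :=
      mul_le_mul_of_nonneg_left h hx.le
    have h3 : x * (y / x) = y := by field_simp
    rw [mul_sub, mul_sub, h3, mul_one] at h2
    nlinarith

lemma coord_abs_le_norm (q : E3) (i : Fin 3) : |q i| ≤ ‖q‖ := by
  rw [EuclideanSpace.norm_eq]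
  calc |q i| = Real.sqrt (‖q i‖ ^ 2) := by
        rw [Real.sqrt_sq_eq_abs, Real.norm_eq_abs, abs_abs]
    _ ≤ Real.sqrt (∑ j, ‖q j‖ ^ 2) := Real.sqrt_le_sqrt
        (Finset.single_le_sum (f := fun j => ‖q j‖ ^ 2)
          (fun j _ => sq_nonneg _) (Finset.mem_univ i))

set_option maxHeartbeats 1000000 in
/-- Minimum free energy principle: if the Jüttner distribution
`J = J(n,β,u;·)` has the same five moments as `f`, then
`(σ_J − β e_J) − (σ_f − β e_f) ≥ 0`, where for a nonnegative `g`,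
`σ_g = −∫ (√(1+|u|²) − u·q/q⁰) g ln g dq` and
`e_g = ∫ (√(1+|u|²) q⁰ − u·q)² g dq/q⁰`. -/
theorem minimum_free_energy (f : E3 → ℝ)
    (hmeas : Measurable f) (hnonneg : ∀ q, 0 ≤ f q)
    (hne : ¬ f =ᵐ[(volume : Measure E3)] 0)
    (hint : Integrable (fun q =>
      (1 + ‖q‖) * (f q + f q * |Real.log (f q)|)))
    (n β : ℝ) (u : E3) (hn : 0 < n) (hβ : 0 < β)
    (hmom0 : (∫ q : E3, (Jut n β u q - f q) / q0 q) = 0)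
    (hmom1 : (∫ q : E3, (Jut n β u q - f q)) = 0)
    (hmom2 : ∀ i : Fin 3, (∫ q : E3, q i * (Jut n β u q - f q) / q0 q) = 0) :
    0 ≤ ((-∫ q : E3, (Real.sqrt (1 + ‖u‖ ^ 2) - ⟪u, q⟫_ℝ / q0 q) *
              (Jut n β u q * Real.log (Jut n β u q)))
          - β * ∫ q : E3, (Real.sqrt (1 + ‖u‖ ^ 2) * q0 q - ⟪u, q⟫_ℝ) ^ 2 *
              Jut n β u q / q0 q)
        - ((-∫ q : E3, (Real.sqrt (1 + ‖u‖ ^ 2) - ⟪u, q⟫_ℝ / q0 q) *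
              (f q * Real.log (f q)))
          - β * ∫ q : E3, (Real.sqrt (1 + ‖u‖ ^ 2) * q0 q - ⟪u, q⟫_ℝ) ^ 2 *
              f q / q0 q) := by
  set s : ℝ := Real.sqrt (1 + ‖u‖ ^ 2) with hs
  have hs2 : s ^ 2 = 1 + ‖u‖ ^ 2 := Real.sq_sqrt (by positivity)
  have hs0 : 0 < s := Real.sqrt_pos.2 (by positivity)
  have hsu : ‖u‖ < s := by
    refine lt_of_pow_lt_pow_left₀ 2 hs0.le ?_
    rw [hs2]; nlinarith [norm_nonneg u]
  have hδ : 0 < s - ‖u‖ := sub_pos.2 hsu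
  have hB : (0:ℝ) ≤ s + ‖u‖ := by positivity
  -- q0 facts
  have hq0pos : ∀ q : E3, 0 < q0 q := fun q => Real.sqrt_pos.2 (by positivity)
  have hq0one : ∀ q : E3, 1 ≤ q0 q := by
    intro q
    rw [show (1:ℝ) = Real.sqrt 1 by rw [Real.sqrt_one], q0]
    exact Real.sqrt_le_sqrt (by nlinarith [sq_nonneg ‖q‖])
  have hq0norm : ∀ q : E3, ‖q‖ ≤ q0 q := by
    intro q
    rw [show ‖q‖ = Real.sqrt (‖q‖ ^ 2) by rw [Real.sqrt_sq (norm_nonneg q)], q0]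
    exact Real.sqrt_le_sqrt (by nlinarith)
  have hq0le : ∀ q : E3, q0 q ≤ 1 + ‖q‖ := by
    intro q
    rw [show (1 + ‖q‖) = Real.sqrt ((1 + ‖q‖) ^ 2) from (Real.sqrt_sq (by positivity)).symm, q0]
    exact Real.sqrt_le_sqrt (by nlinarith [norm_nonneg q])
  have h2q0 : ∀ q : E3, 1 + ‖q‖ ≤ 2 * q0 q := fun q => by
    have := hq0one q; have := hq0norm q; linarith
  -- inner product bounds
  have hiq : ∀ q : E3, |⟪u, q⟫_ℝ| ≤ ‖u‖ * q0 q := fun q =>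
    (abs_real_inner_le_norm u q).trans
      (mul_le_mul_of_nonneg_left (hq0norm q) (norm_nonneg u))
  have hwnn : ∀ q : E3, 0 ≤ s - ⟪u, q⟫_ℝ / q0 q := by
    intro q
    have h1 : ⟪u, q⟫_ℝ / q0 q ≤ ‖u‖ := by
      rw [div_le_iff₀ (hq0pos q)]
      calc ⟪u, q⟫_ℝ ≤ |⟪u, q⟫_ℝ| := le_abs_self _
        _ ≤ ‖u‖ * q0 q := hiq q
    linarith
  have hwb : ∀ q : E3, |s - ⟪u, q⟫_ℝ / q0 q| ≤ s + ‖u‖ := by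
    intro q
    have h1 : |⟪u, q⟫_ℝ / q0 q| ≤ ‖u‖ := by
      rw [abs_div, abs_of_pos (hq0pos q), div_le_iff₀ (hq0pos q)]
      exact hiq q
    calc |s - ⟪u, q⟫_ℝ / q0 q| ≤ |s| + |⟪u, q⟫_ℝ / q0 q| := abs_sub _ _
      _ ≤ s + ‖u‖ := by rw [abs_of_pos hs0]; linarith
  have hann : ∀ q : E3, (s - ‖u‖) * q0 q ≤ s * q0 q - ⟪u, q⟫_ℝ := by
    intro q
    have h1 := (abs_le.1 (hiq q)).2
    nlinarith [hq0pos q, norm_nonneg u]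
  have hab : ∀ q : E3, |s * q0 q - ⟪u, q⟫_ℝ| ≤ (s + ‖u‖) * q0 q := by
    intro q
    have h1 := abs_le.1 (hiq q)
    rw [abs_le]
    constructor <;> nlinarith [hq0pos q]
  -- continuity / measurability
  have hcq0 : Continuous q0 := by
    unfold q0; fun_prop
  have hcinner : Continuous fun q : E3 => ⟪u, q⟫_ℝ := continuous_const.inner continuous_id
  have hcw : Continuous fun q : E3 => s - ⟪u, q⟫_ℝ / q0 q :=
    continuous_const.sub (hcinner.div hcq0 fun q => (hq0pos q).ne')
  have hca : Continuous fun q : E3 => s * q0 q - ⟪u, q⟫_ℝ :=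
    (continuous_const.mul hcq0).sub hcinner
  -- positivity of Mf
  have intM : Integrable fun p : E3 => Real.exp (-β * Real.sqrt (1 + ‖p‖ ^ 2)) := by
    refine (poly_exp_integrable 0 (half_pos hβ)).mono'
      (Measurable.aestronglyMeasurable (by fun_prop))
      (Filter.Eventually.of_forall fun q => ?_)
    rw [Real.norm_eq_abs, abs_of_pos (Real.exp_pos _), pow_zero, one_mul]
    apply Real.exp_le_exp.2
    have h1 : 1 + ‖q‖ ≤ 2 * Real.sqrt (1 + ‖q‖ ^ 2) := h2q0 q
    nlinarith [hβ.le]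
  have hM : 0 < Mf β := by
    rw [Mf, integral_pos_iff_support_of_nonneg (fun p => (Real.exp_pos _).le) intM]
    have hsupp : Function.support (fun p : E3 => Real.exp (-β * Real.sqrt (1 + ‖p‖ ^ 2)))
        = Set.univ :=
      Set.eq_univ_iff_forall.2 fun p => Function.mem_support.2 (Real.exp_ne_zero _)
    rw [hsupp]
    exact IsOpen.measure_pos volume isOpen_univ Set.univ_nonempty
  set c : ℝ := n / Mf β with hcdef
  have hc : 0 < c := div_pos hn hM
  have hJeq : ∀ q : E3, Jut n β u q = c * Real.exp (-β * (s * q0 q - ⟪u, q⟫_ℝ)) :=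
    fun q => rfl
  have hJfun : Jut n β u = fun q => c * Real.exp (-β * (s * q0 q - ⟪u, q⟫_ℝ)) :=
    funext hJeq
  have hcJ : Continuous (Jut n β u) := by
    rw [hJfun]
    exact continuous_const.mul (Real.continuous_exp.comp (continuous_const.mul hca))
  have hJpos : ∀ q, 0 < Jut n β u q := fun q => by rw [hJeq q]; positivity
  have hlogJ : ∀ q, Real.log (Jut n β u q) = Real.log c - β * (s * q0 q - ⟪u, q⟫_ℝ) := by
    intro q
    rw [hJeq q, Real.log_mul hc.ne' (Real.exp_ne_zero _), Real.log_exp]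
    ring
  set ε : ℝ := β * (s - ‖u‖) / 2 with hεdef
  have hε : 0 < ε := by positivity
  have hJle : ∀ q : E3, Jut n β u q ≤ c * Real.exp (-(ε * (1 + ‖q‖))) := by
    intro q
    rw [hJeq q]
    apply mul_le_mul_of_nonneg_left _ hc.le
    apply Real.exp_le_exp.2
    have h1 := hann q
    have h2 := h2q0 q
    rw [hεdef]
    nlinarith [hβ.le, (hq0pos q).le, mul_le_mul_of_nonneg_left h2 hδ.le,
      mul_le_mul_of_nonneg_left h1 hβ.le]
  -- generic integrability helpers
  have intJaux : ∀ (g : E3 → ℝ) (C : ℝ), Measurable g →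
      (∀ q, |g q| ≤ C * (1 + ‖q‖)) → Integrable fun q => g q * Jut n β u q := by
    intro g C hg hb
    refine ((poly_exp_integrable 1 hε).const_mul (C * c)).mono'
      ((hg.mul hcJ.measurable).aestronglyMeasurable)
      (Filter.Eventually.of_forall fun q => ?_)
    rw [Real.norm_eq_abs, abs_mul, abs_of_pos (hJpos q)]
    have h1 : |g q| * Jut n β u q ≤ (C * (1 + ‖q‖)) * (c * Real.exp (-(ε * (1 + ‖q‖)))) :=
      mul_le_mul (hb q) (hJle q) (hJpos q).le (le_trans (abs_nonneg _) (hb q))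
    refine le_trans h1 (le_of_eq ?_)
    ring
  have intFaux : ∀ (g : E3 → ℝ) (C : ℝ), Measurable g →
      (∀ q, |g q| ≤ C * (1 + ‖q‖)) → Integrable fun q => g q * f q := by
    intro g C hg hb
    refine (hint.const_mul C).mono' ((hg.mul hmeas).aestronglyMeasurable)
      (Filter.Eventually.of_forall fun q => ?_)
    rw [Real.norm_eq_abs, abs_mul, abs_of_nonneg (hnonneg q)]
    have hC : (0:ℝ) ≤ C * (1 + ‖q‖) := le_trans (abs_nonneg _) (hb q)
    have h2 : f q ≤ f q + f q * |Real.log (f q)| :=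
      le_add_of_nonneg_right (mul_nonneg (hnonneg q) (abs_nonneg _))
    refine le_trans (le_trans (mul_le_mul_of_nonneg_right (hb q) (hnonneg q))
      (mul_le_mul_of_nonneg_left h2 hC)) (le_of_eq (by ring))
  -- pointwise bounds for the various weights
  have hbw : ∀ q : E3, |s - ⟪u, q⟫_ℝ / q0 q| ≤ (s + ‖u‖) * (1 + ‖q‖) := fun q =>
    (hwb q).trans (le_mul_of_one_le_right hB (by linarith [norm_nonneg q]))
  have hb1 : ∀ q : E3, |(1:ℝ)| ≤ 1 * (1 + ‖q‖) := fun q => by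
    rw [abs_one, one_mul]; linarith [norm_nonneg q]
  have hba2 : ∀ q : E3, |(s * q0 q - ⟪u, q⟫_ℝ) ^ 2 / q0 q| ≤ (s + ‖u‖) ^ 2 * (1 + ‖q‖) := by
    intro q
    rw [abs_div, abs_of_pos (hq0pos q), div_le_iff₀ (hq0pos q), abs_pow]
    have h1 : |s * q0 q - ⟪u, q⟫_ℝ| ^ 2 ≤ ((s + ‖u‖) * q0 q) ^ 2 :=
      pow_le_pow_left₀ (abs_nonneg _) (hab q) 2
    nlinarith [mul_nonneg (mul_nonneg (sq_nonneg (s + ‖u‖)) (hq0pos q).le)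
      (sub_nonneg.2 (hq0le q))]
  have hbqi : ∀ (i : Fin 3) (q : E3), |q i / q0 q| ≤ 1 * (1 + ‖q‖) := by
    intro i q
    rw [abs_div, abs_of_pos (hq0pos q), div_le_iff₀ (hq0pos q), one_mul]
    nlinarith [coord_abs_le_norm q i, hq0norm q, hq0pos q, norm_nonneg q,
      mul_nonneg (norm_nonneg q) (hq0pos q).le]
  have hblogJ : ∀ q : E3, |(s - ⟪u, q⟫_ℝ / q0 q) * Real.log (Jut n β u q)|
      ≤ ((s + ‖u‖) * (|Real.log c| + β * (s + ‖u‖))) * (1 + ‖q‖) := by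
    intro q
    rw [abs_mul, hlogJ q]
    have h4 : |s * q0 q - ⟪u, q⟫_ℝ| ≤ (s + ‖u‖) * (1 + ‖q‖) :=
      (hab q).trans (by nlinarith [mul_nonneg hB (sub_nonneg.2 (hq0le q))])
    have h3 : |Real.log c - β * (s * q0 q - ⟪u, q⟫_ℝ)|
        ≤ |Real.log c| + β * ((s + ‖u‖) * (1 + ‖q‖)) := by
      refine (abs_sub _ _).trans ?_
      rw [abs_mul, abs_of_pos hβ]
      have := mul_le_mul_of_nonneg_left h4 hβ.le
      linarith
    have h5 := mul_le_mul (hwb q) h3 (abs_nonneg _) hB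
    nlinarith [mul_nonneg (mul_nonneg hB (abs_nonneg (Real.log c))) (norm_nonneg q), h5]
  -- the integrable functions we need
  have iJ1 : Integrable (Jut n β u) := by
    have h := intJaux (fun _ => (1:ℝ)) 1 measurable_const hb1
    simpa using h
  have if1 : Integrable f := by
    have h := intFaux (fun _ => (1:ℝ)) 1 measurable_const hb1
    simpa using h
  have iJw : Integrable fun q : E3 => (s - ⟪u, q⟫_ℝ / q0 q) * Jut n β u q :=
    intJaux _ (s + ‖u‖) hcw.measurable hbw
  have ifw : Integrable fun q : E3 => (s - ⟪u, q⟫_ℝ / q0 q) * f q :=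
    intFaux _ (s + ‖u‖) hcw.measurable hbw
  have hma2 : Measurable fun q : E3 => (s * q0 q - ⟪u, q⟫_ℝ) ^ 2 / q0 q :=
    (((hca.pow 2).div hcq0 fun q => (hq0pos q).ne')).measurable
  have iJa2 : Integrable fun q : E3 => (s * q0 q - ⟪u, q⟫_ℝ) ^ 2 * Jut n β u q / q0 q := by
    have h := intJaux _ ((s + ‖u‖) ^ 2) hma2 hba2
    have e : (fun q : E3 => (s * q0 q - ⟪u, q⟫_ℝ) ^ 2 * Jut n β u q / q0 q)
        = fun q => ((s * q0 q - ⟪u, q⟫_ℝ) ^ 2 / q0 q) * Jut n β u q := by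
      funext q; ring
    rw [e]; exact h
  have ifa2 : Integrable fun q : E3 => (s * q0 q - ⟪u, q⟫_ℝ) ^ 2 * f q / q0 q := by
    have h := intFaux _ ((s + ‖u‖) ^ 2) hma2 hba2
    have e : (fun q : E3 => (s * q0 q - ⟪u, q⟫_ℝ) ^ 2 * f q / q0 q)
        = fun q => ((s * q0 q - ⟪u, q⟫_ℝ) ^ 2 / q0 q) * f q := by
      funext q; ring
    rw [e]; exact h
  have hcproj : ∀ i : Fin 3, Continuous fun q : E3 => q i := fun i =>
    (EuclideanSpace.proj (𝕜 := ℝ) i).continuous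
  have hmqi : ∀ i : Fin 3, Measurable fun q : E3 => q i / q0 q := fun i =>
    ((hcproj i).div hcq0 fun q => (hq0pos q).ne').measurable
  have iJqi : ∀ i : Fin 3, Integrable fun q : E3 => q i * Jut n β u q / q0 q := by
    intro i
    have h := intJaux (fun q => q i / q0 q) 1 (hmqi i) (hbqi i)
    have e : (fun q : E3 => q i * Jut n β u q / q0 q)
        = fun q => (q i / q0 q) * Jut n β u q := by funext q; ring
    rw [e]; exact h
  have ifqi : ∀ i : Fin 3, Integrable fun q : E3 => q i * f q / q0 q := by
    intro i
    have h := intFaux (fun q => q i / q0 q) 1 (hmqi i) (hbqi i)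
    have e : (fun q : E3 => q i * f q / q0 q)
        = fun q => (q i / q0 q) * f q := by funext q; ring
    rw [e]; exact h
  have iflog : Integrable fun q : E3 => (s - ⟪u, q⟫_ℝ / q0 q) * (f q * Real.log (f q)) := by
    refine (hint.const_mul (s + ‖u‖)).mono'
      ((hcw.measurable.mul (hmeas.mul (Real.measurable_log.comp hmeas))).aestronglyMeasurable)
      (Filter.Eventually.of_forall fun q => ?_)
    rw [Real.norm_eq_abs, abs_mul, abs_mul, abs_of_nonneg (hnonneg q)]
    have h2 : f q * |Real.log (f q)| ≤ (1 + ‖q‖) * (f q + f q * |Real.log (f q)|) := by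
      nlinarith [norm_nonneg q, hnonneg q,
        mul_nonneg (hnonneg q) (abs_nonneg (Real.log (f q))),
        mul_nonneg (norm_nonneg q) (mul_nonneg (hnonneg q) (abs_nonneg (Real.log (f q))))]
    exact mul_le_mul (hwb q) h2 (mul_nonneg (hnonneg q) (abs_nonneg _)) hB
  have iJlog : Integrable fun q : E3 =>
      (s - ⟪u, q⟫_ℝ / q0 q) * (Jut n β u q * Real.log (Jut n β u q)) := by
    have h := intJaux (fun q => (s - ⟪u, q⟫_ℝ / q0 q) * Real.log (Jut n β u q))
      ((s + ‖u‖) * (|Real.log c| + β * (s + ‖u‖)))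
      (hcw.measurable.mul (Real.measurable_log.comp hcJ.measurable)) hblogJ
    have e : (fun q : E3 => (s - ⟪u, q⟫_ℝ / q0 q) * (Jut n β u q * Real.log (Jut n β u q)))
        = fun q => ((s - ⟪u, q⟫_ℝ / q0 q) * Real.log (Jut n β u q)) * Jut n β u q := by
      funext q; ring
    rw [e]; exact h
  -- the moment identities
  have hinner : ∀ q : E3, ⟪u, q⟫_ℝ = ∑ i, u i * q i := by
    intro q
    simp [PiLp.inner_apply, RCLike.inner_apply, conj_trivial]
    exact Finset.sum_congr rfl fun i _ => mul_comm _ _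
  have intD : Integrable fun q : E3 => Jut n β u q - f q := iJ1.sub if1
  have intqiD : ∀ i : Fin 3, Integrable fun q : E3 => q i * (Jut n β u q - f q) / q0 q := by
    intro i
    have e : (fun q : E3 => q i * (Jut n β u q - f q) / q0 q)
        = fun q => q i * Jut n β u q / q0 q - q i * f q / q0 q := by funext q; ring
    rw [e]; exact (iJqi i).sub (ifqi i)
  have hWD : (∫ q : E3, (s - ⟪u, q⟫_ℝ / q0 q) * (Jut n β u q - f q)) = 0 := by
    have e : (fun q : E3 => (s - ⟪u, q⟫_ℝ / q0 q) * (Jut n β u q - f q))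
        = fun q => s * (Jut n β u q - f q)
            - ∑ i, u i * (q i * (Jut n β u q - f q) / q0 q) := by
      funext q
      rw [hinner q, sub_mul]
      congr 1
      rw [div_mul_eq_mul_div, Finset.sum_mul, Finset.sum_div]
      exact Finset.sum_congr rfl fun i _ => by ring
    rw [e, integral_sub (intD.const_mul s)
        (integrable_finset_sum _ fun i _ => ((intqiD i).const_mul (u i))),
      integral_finset_sum _ fun i _ => ((intqiD i).const_mul (u i)),
      integral_const_mul, hmom1]
    simp [integral_const_mul, hmom2]
  have hWJf : (∫ q : E3, (s - ⟪u, q⟫_ℝ / q0 q) * Jut n β u q)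
      = ∫ q : E3, (s - ⟪u, q⟫_ℝ / q0 q) * f q := by
    have e : (fun q : E3 => (s - ⟪u, q⟫_ℝ / q0 q) * (Jut n β u q - f q))
        = fun q => (s - ⟪u, q⟫_ℝ / q0 q) * Jut n β u q
            - (s - ⟪u, q⟫_ℝ / q0 q) * f q := by funext q; ring
    rw [e, integral_sub iJw ifw] at hWD
    linarith
  have hA : (∫ q : E3, (s - ⟪u, q⟫_ℝ / q0 q) * (Jut n β u q * Real.log (Jut n β u q)))
      = Real.log c * (∫ q : E3, (s - ⟪u, q⟫_ℝ / q0 q) * f q)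
        - β * ∫ q : E3, (s * q0 q - ⟪u, q⟫_ℝ) ^ 2 * Jut n β u q / q0 q := by
    have e : (fun q : E3 => (s - ⟪u, q⟫_ℝ / q0 q) * (Jut n β u q * Real.log (Jut n β u q)))
        = fun q => Real.log c * ((s - ⟪u, q⟫_ℝ / q0 q) * Jut n β u q)
            - β * ((s * q0 q - ⟪u, q⟫_ℝ) ^ 2 * Jut n β u q / q0 q) := by
      funext q
      rw [hlogJ q]
      have hq : q0 q ≠ 0 := (hq0pos q).ne'
      field_simp
    rw [e, integral_sub (iJw.const_mul _) (iJa2.const_mul β), integral_const_mul,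
      integral_const_mul, hWJf]
  have hBB : (∫ q : E3, (s - ⟪u, q⟫_ℝ / q0 q) *
        (f q * Real.log (f q) - f q * Real.log (Jut n β u q)))
      = (∫ q : E3, (s - ⟪u, q⟫_ℝ / q0 q) * (f q * Real.log (f q)))
        + β * (∫ q : E3, (s * q0 q - ⟪u, q⟫_ℝ) ^ 2 * f q / q0 q)
        - Real.log c * ∫ q : E3, (s - ⟪u, q⟫_ℝ / q0 q) * f q := by
    have e : (fun q : E3 => (s - ⟪u, q⟫_ℝ / q0 q) *
          (f q * Real.log (f q) - f q * Real.log (Jut n β u q)))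
        = fun q => ((s - ⟪u, q⟫_ℝ / q0 q) * (f q * Real.log (f q))
            + β * ((s * q0 q - ⟪u, q⟫_ℝ) ^ 2 * f q / q0 q))
            - Real.log c * ((s - ⟪u, q⟫_ℝ / q0 q) * f q) := by
      funext q
      rw [hlogJ q]
      have hq : q0 q ≠ 0 := (hq0pos q).ne'
      field_simp
      ring
    have iadd : Integrable fun q : E3 => (s - ⟪u, q⟫_ℝ / q0 q) * (f q * Real.log (f q))
        + β * ((s * q0 q - ⟪u, q⟫_ℝ) ^ 2 * f q / q0 q) := iflog.add (ifa2.const_mul β)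
    rw [e, integral_sub iadd (ifw.const_mul _),
      integral_add iflog (ifa2.const_mul β), integral_const_mul, integral_const_mul]
  have hCkey : (0:ℝ) ≤ ∫ q : E3, (s - ⟪u, q⟫_ℝ / q0 q) *
      (f q * Real.log (f q) - f q * Real.log (Jut n β u q)) := by
    have hint1 : Integrable fun q : E3 => (s - ⟪u, q⟫_ℝ / q0 q) * (f q - Jut n β u q) := by
      have e : (fun q : E3 => (s - ⟪u, q⟫_ℝ / q0 q) * (f q - Jut n β u q))
          = fun q => (s - ⟪u, q⟫_ℝ / q0 q) * f q
              - (s - ⟪u, q⟫_ℝ / q0 q) * Jut n β u q := by funext q; ring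
      rw [e]; exact ifw.sub iJw
    have hint2 : Integrable fun q : E3 => (s - ⟪u, q⟫_ℝ / q0 q) *
        (f q * Real.log (f q) - f q * Real.log (Jut n β u q)) := by
      have e : (fun q : E3 => (s - ⟪u, q⟫_ℝ / q0 q) *
            (f q * Real.log (f q) - f q * Real.log (Jut n β u q)))
          = fun q => ((s - ⟪u, q⟫_ℝ / q0 q) * (f q * Real.log (f q))
              + β * ((s * q0 q - ⟪u, q⟫_ℝ) ^ 2 * f q / q0 q))
              - Real.log c * ((s - ⟪u, q⟫_ℝ / q0 q) * f q) := by
        funext q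
        rw [hlogJ q]
        have hq : q0 q ≠ 0 := (hq0pos q).ne'
        field_simp
        ring
      rw [e]; exact (iflog.add (ifa2.const_mul β)).sub (ifw.const_mul _)
    have h0 : (∫ q : E3, (s - ⟪u, q⟫_ℝ / q0 q) * (f q - Jut n β u q)) = 0 := by
      have e : (fun q : E3 => (s - ⟪u, q⟫_ℝ / q0 q) * (f q - Jut n β u q))
          = fun q => -((s - ⟪u, q⟫_ℝ / q0 q) * (Jut n β u q - f q)) := by funext q; ring
      rw [e, integral_neg, hWD, neg_zero]
    have hle := integral_mono hint1 hint2 fun q =>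
      mul_le_mul_of_nonneg_left (entropy_key (hnonneg q) (hJpos q)) (hwnn q)
    rw [h0] at hle
    exact hle
  linarith [hA, hBB, hCkey]
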